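/- If |S| ≤ 2Σ with 0 ≤ Σ ≤ 1, and q = 2Σ² + (1/2)·((3γ−2)+(2−γ)V²)/(1+(γ−1)V²)·Ω with Ω = 1 − Σ² − A² − N² ≥ 0, 0 ≤ V < 1, A, N real, then for 0 < γ < 6/7 the quantity 2(1−γ)q + (2−γ) + γS is strictly positive. -/
import Mathlib


theorem stmt_0 (Sig S A N V Ω γ q : ℝ)
    (hSig0 : 0 ≤ Sig) (hSig1 : Sig ≤ 1) (hS : |S| ≤ 2 * Sig)
    (hV0 : 0 ≤ V) (hV1 : V < 1)
    (hγ0 : 0 < γ) (hγ1 : γ < 6 / 7)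
    (hΩ : Ω = 1 - Sig^2 - A^2 - N^2) (hΩ0 : 0 ≤ Ω)
    (hq : q = 2 * Sig^2 + (1/2) * ((3*γ - 2) + (2 - γ) * V^2) / (1 + (γ - 1) * V^2) * Ω) :
    0 < 2 * (1 - γ) * q + (2 - γ) + γ * S := by
  have hV2 : V^2 < 1 := by nlinarith
  have hG : 0 < 1 + (γ - 1) * V^2 := by nlinarith [sq_nonneg V]
  have hSlow : -(2 * Sig) ≤ S := neg_le_of_abs_le hS
  have hγ1' : γ < 1 := by linarith
  have hγS : γ * (S + 2 * Sig) ≥ 0 :=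
    mul_nonneg hγ0.le (by linarith)
  obtain ⟨D, hDdef⟩ : ∃ D : ℝ, D = ((3*γ - 2) + (2 - γ) * V^2) / (1 + (γ - 1) * V^2) :=
    ⟨_, rfl⟩
  have hq' : q = 2 * Sig^2 + (1/2) * D * Ω := by
    rw [hq, hDdef]; ring
  have hΩle : Ω ≤ 1 - Sig^2 := by nlinarith [sq_nonneg A, sq_nonneg N]
  rcases le_or_gt (2/3 : ℝ) γ with hc | hc
  · -- γ ≥ 2/3 : numerator nonneg, so D ≥ 0
    have hD0 : 0 ≤ D := by
      rw [hDdef]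
      apply div_nonneg _ hG.le
      nlinarith [sq_nonneg V]
    have hDΩ : 0 ≤ (1 - γ) * (D * Ω) :=
      mul_nonneg (by linarith) (mul_nonneg hD0 hΩ0)
    clear hq hDdef hS hV0 hV1 hV2 hG hΩ hΩle hD0 hΩ0
    -- reduce to 0 < 4(1-γ)Sig² - 2γ Sig + (2-γ)
    rcases le_or_gt γ (4/5 : ℝ) with hd | hd
    · nlinarith [sq_nonneg (4*(1-γ)*Sig - γ),
        mul_nonneg (show (0:ℝ) ≤ 4/5 - γ by linarith) (show (0:ℝ) ≤ 16/5 - γ by linarith),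
        mul_nonneg (show (0:ℝ) ≤ 1 - γ by linarith) (sq_nonneg Sig)]
    · nlinarith [mul_nonneg (show (0:ℝ) ≤ 10*γ - 8 by linarith) (show (0:ℝ) ≤ 1 - Sig by linarith),
        mul_nonneg (show (0:ℝ) ≤ 1 - γ by linarith) (sq_nonneg (1 - Sig))]
  · -- γ < 2/3
    have hDlow : (3*γ - 2) ≤ D := by
      rw [hDdef, le_div_iff₀ hG]
      have hid : 3*γ - 2 + (2 - γ) * V^2 - (3*γ - 2) * (1 + (γ - 1) * V^2)
          = γ * (4 - 3*γ) * V^2 := by ring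
      have hnn : 0 ≤ γ * (4 - 3*γ) * V^2 :=
        mul_nonneg (mul_nonneg hγ0.le (by linarith)) (sq_nonneg V)
      linarith
    have h1 : (3*γ - 2) * Ω ≤ D * Ω := mul_le_mul_of_nonneg_right hDlow hΩ0
    have h2 : (3*γ - 2) * (1 - Sig^2) ≤ (3*γ - 2) * Ω :=
      mul_le_mul_of_nonpos_left hΩle (by linarith)
    have h3 : (1 - γ) * ((3*γ - 2) * (1 - Sig^2)) ≤ (1 - γ) * (D * Ω) :=
      mul_le_mul_of_nonneg_left (le_trans h2 h1) (by linarith)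
    clear hq hDdef hV0 hV1 hV2 hG hΩ hΩle hDlow h1 h2
    -- reduce to 0 < 3(1-γ)(2-γ)Sig² - 2γ Sig + γ(4-3γ)
    have t1 : (1/3:ℝ)*(4/3) < (1-γ)*(2-γ) := by
      have p := mul_pos (show (0:ℝ) < 2/3 - γ by linarith) (show (0:ℝ) < 7/3 - γ by linarith)
      nlinarith [p]
    have t2 : ((1/3:ℝ)*(4/3))*2 < ((1-γ)*(2-γ))*(4-3*γ) :=
      mul_lt_mul'' t1 (by linarith) (by norm_num) (by norm_num)
    have key : (0:ℝ) < 3*(1-γ)*(2-γ)*(4-3*γ) - γ := by nlinarith [t2]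
    have quad : 0 < 3*(1-γ)*(2-γ)*Sig^2 - 2*γ*Sig + γ*(4-3*γ) := by
      clear hq' h3 hγS hSlow hS hΩ0 t1 t2
      nlinarith [sq_nonneg (3*(1-γ)*(2-γ)*Sig - γ), mul_pos hγ0 key,
        mul_pos (show (0:ℝ) < 1 - γ by linarith) (show (0:ℝ) < 2 - γ by linarith)]
    have expand : 2*(1-γ)*q + (2-γ) + γ*S
        = 4*(1-γ)*Sig^2 + (1-γ)*(D*Ω) + (2-γ) + γ*S := by rw [hq']; ring
    have hident : 4*(1-γ)*Sig^2 + (1-γ)*((3*γ-2)*(1-Sig^2)) + (2-γ) - 2*γ*Sig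
        = 3*(1-γ)*(2-γ)*Sig^2 - 2*γ*Sig + γ*(4-3*γ) := by ring
    linarith [quad, h3, hγS, hident, expand]
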